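/- arXiv:2604.12858 — 4 statements merged into one kernel-verified Lean document; each statement's English description precedes it below -/
import Mathlib

section
/- (Theorem 3.1, case d=1; Born–Faddeev-type leading asymptotics.) There exist constants C > 0 and κ₀ > 0 such that for all κ ≥ κ₀ the matrix A(κ) is invertible and for all k, ℓ ∈ {−κ, κ} one has |f(k,ℓ) − Σ_{j=1}^n (−1/(2π α_j)) e^{i(k−ℓ) y_j}| ≤ C κ^{−1}. -/
open Complex Finset Matrix

noncomputable section

/-- The matrix `A(κ)` for a one-dimensional multipoint potential:
`A(κ)_{jj} = α_j + 1/(2iκ)`, `A(κ)_{jj'} = e^{iκ|y_j - y_{j'}|}/(2iκ)` for `j ≠ j'`. -/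
def A1 (n : ℕ) (y : Fin n → ℝ) (α : Fin n → ℂ) (κ : ℝ) : Matrix (Fin n) (Fin n) ℂ :=
  fun j j' => (if j = j' then α j else 0) +
    Complex.exp (Complex.I * κ * |y j - y j'|) / (2 * Complex.I * κ)

/-- `q(k) = A(κ)⁻¹ b(k)` with `b(k)_j = -e^{i k y_j}`. -/
def q1 (n : ℕ) (y : Fin n → ℝ) (α : Fin n → ℂ) (κ k : ℝ) : Fin n → ℂ :=
  (A1 n y α κ)⁻¹ *ᵥ fun j => -Complex.exp (Complex.I * k * y j)

/-- The scattering amplitude `f(k,ℓ) = (2π)⁻¹ Σ_j q_j(k) e^{-iℓ y_j}`. -/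
def f1 (n : ℕ) (y : Fin n → ℝ) (α : Fin n → ℂ) (κ k ℓ : ℝ) : ℂ :=
  (2 * Real.pi : ℂ)⁻¹ * ∑ j, q1 n y α κ k j * Complex.exp (-Complex.I * ℓ * y j)

open scoped NNReal

attribute [local instance] Matrix.linftyOpNormedRing Matrix.linftyOpNormedAlgebra

lemma entry_norm_bound {n : ℕ} (A : Matrix (Fin n) (Fin n) ℂ) {c : ℝ} (hc : 0 ≤ c)
    (h : ∀ i j, ‖A i j‖ ≤ c) : ‖A‖ ≤ n * c := by
  have h1 : ‖A‖₊ ≤ (n : ℝ≥0) * c.toNNReal := by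
    rw [Matrix.linfty_opNNNorm_def]
    refine Finset.sup_le fun i _ => ?_
    calc ∑ j, ‖A i j‖₊ ≤ ∑ _j : Fin n, c.toNNReal :=
          Finset.sum_le_sum fun j _ =>
            (Real.le_toNNReal_iff_coe_le hc).2 (by simpa using h i j)
      _ = n * c.toNNReal := by simp [Finset.sum_const, Finset.card_univ]
  calc ‖A‖ = ((‖A‖₊ : ℝ≥0) : ℝ) := (coe_nnnorm _).symm
    _ ≤ (((n : ℝ≥0) * c.toNNReal : ℝ≥0) : ℝ) := NNReal.coe_le_coe.2 h1
    _ = n * c := by simp [Real.coe_toNNReal c hc]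

lemma norm_exp_eq_one' {z : ℂ} (h : z.re = 0) : ‖Complex.exp z‖ = 1 := by
  rw [Complex.norm_exp, h, Real.exp_zero]

/-- Theorem 3.1,case  d=1: Born–Faddeev-type leading asymptotics. -/
theorem stmt0 (n : ℕ) (y : Fin n → ℝ) (α : Fin n → ℂ)
    (hy : Function.Injective y) (hα : ∀ j, α j ≠ 0) :
    ∃ C > (0 : ℝ), ∃ κ₀ > (0 : ℝ), ∀ κ ≥ κ₀, IsUnit (A1 n y α κ) ∧
      ∀ k ℓ : ℝ, (k = κ ∨ k = -κ) → (ℓ = κ ∨ ℓ = -κ) →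
        ‖f1 n y α κ k ℓ - ∑ j, (-1 / (2 * Real.pi * α j)) *
            Complex.exp (Complex.I * (k - ℓ) * y j)‖ ≤ C / κ := by
  rcases Nat.eq_zero_or_pos n with hn | hn
  · subst hn
    refine ⟨1, one_pos, 1, one_pos, fun κ hκ => ⟨isUnit_of_subsingleton _, fun k ℓ _ _ => ?_⟩⟩
    have hκ0 : (0:ℝ) < κ := lt_of_lt_of_le one_pos hκ
    simp [f1]
    positivity
  · have hne : Nonempty (Fin n) := Fin.pos_iff_nonempty.1 hn
    set m' : ℝ := ‖fun j => (α j)⁻¹‖ with hm'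
    have hm0 : (0:ℝ) ≤ m' := norm_nonneg _
    refine ⟨(n:ℝ)^2 * m'^2 + 1, by positivity, (n:ℝ) * m' + 1, by positivity,
      fun κ hκ => ?_⟩
    have hκ1 : (1:ℝ) ≤ κ := le_trans (by nlinarith [Nat.cast_nonneg (α := ℝ) n]) hκ
    have hκ0 : (0:ℝ) < κ := lt_of_lt_of_le one_pos hκ1
    set D : Matrix (Fin n) (Fin n) ℂ := diagonal α with hD
    set Dinv : Matrix (Fin n) (Fin n) ℂ := diagonal (fun j => (α j)⁻¹) with hDinv
    set E : Matrix (Fin n) (Fin n) ℂ :=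
      (fun j j' => Complex.exp (Complex.I * κ * |y j - y j'|) / (2 * Complex.I * κ)) with hE
    have hAeq : A1 n y α κ = D + E := by
      rw [hD, hE]; ext i j
      simp [A1, Matrix.add_apply, Matrix.diagonal_apply]
      rfl
    have hEnorm : ‖E‖ ≤ (n:ℝ) * (1 / (2*κ)) := by
      refine entry_norm_bound _ (by positivity) fun i j => ?_
      rw [hE]
      have h1 : ‖Complex.exp (Complex.I * κ * |y i - y j|)‖ = 1 :=
        norm_exp_eq_one' (by simp)
      have h2 : ‖(2 * Complex.I * (κ:ℂ))‖ = 2 * κ := by simp [norm_mul, abs_of_pos hκ0]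
      calc ‖Complex.exp (Complex.I * κ * |y i - y j|) / (2 * Complex.I * κ)‖
          = 1 / (2 * κ) := by rw [norm_div, h1, h2]
        _ ≤ 1 / (2 * κ) := le_refl _
    have hDinvnorm : ‖Dinv‖ = m' := by rw [hDinv, Matrix.linfty_opNorm_diagonal]
    set M : Matrix (Fin n) (Fin n) ℂ := Dinv * E with hM
    have hMnorm : ‖M‖ ≤ 1/2 := by
      have h3 : ‖M‖ ≤ m' * ((n:ℝ) * (1/(2*κ))) := by
        calc ‖M‖ ≤ ‖Dinv‖ * ‖E‖ := Matrix.linfty_opNorm_mul _ _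
          _ ≤ m' * ((n:ℝ) * (1/(2*κ))) := by
              rw [hDinvnorm]; exact mul_le_mul_of_nonneg_left hEnorm hm0
      have h4 : m' * ((n:ℝ) * (1/(2*κ))) ≤ 1/2 := by
        rw [show m' * ((n:ℝ) * (1/(2*κ))) = (m' * n)/(2*κ) by ring,
          div_le_iff₀ (by positivity)]
        nlinarith
      linarith
    have hDD' : D * Dinv = 1 := by
      rw [hD, hDinv, Matrix.diagonal_mul_diagonal,
        show (fun i => α i * (α i)⁻¹) = fun _ => (1:ℂ) from
          funext fun i => mul_inv_cancel₀ (hα i), Matrix.diagonal_one]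
    have hD'D : Dinv * D = 1 := by
      rw [hD, hDinv, Matrix.diagonal_mul_diagonal,
        show (fun i => (α i)⁻¹ * α i) = fun _ => (1:ℂ) from
          funext fun i => inv_mul_cancel₀ (hα i), Matrix.diagonal_one]
    set uD : (Matrix (Fin n) (Fin n) ℂ)ˣ := ⟨D, Dinv, hDD', hD'D⟩ with huD
    have hMlt : ‖-M‖ < 1 := by rw [norm_neg]; linarith
    set u1 : (Matrix (Fin n) (Fin n) ℂ)ˣ := Units.oneSub (-M) hMlt with hu1
    have hu1v : (u1 : Matrix (Fin n) (Fin n) ℂ) = 1 + M := by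
      rw [hu1, Units.val_oneSub, sub_neg_eq_add]
    set u : (Matrix (Fin n) (Fin n) ℂ)ˣ := uD * u1 with hu
    have huv : (u : Matrix (Fin n) (Fin n) ℂ) = A1 n y α κ := by
      rw [hu, Units.val_mul, hu1v]
      show D * (1 + M) = _
      rw [mul_add, mul_one, hM, ← mul_assoc, hDD', one_mul, hAeq]
    have hunit : IsUnit (A1 n y α κ) := huv ▸ u.isUnit
    refine ⟨hunit, fun k ℓ _ _ => ?_⟩
    have hAinv : (A1 n y α κ)⁻¹ = (↑u⁻¹ : Matrix (Fin n) (Fin n) ℂ) := by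
      rw [← huv, Matrix.nonsing_inv_eq_ringInverse, Ring.inverse_unit]
    set x : Matrix (Fin n) (Fin n) ℂ := ↑u1⁻¹ with hx
    have hxn : ‖x‖ ≤ 2 := by
      have h4 : (1 + M) * x = 1 := by rw [← hu1v, hx]; exact u1.mul_inv
      have h5 : x = 1 - M * x := by
        rw [add_mul, one_mul] at h4
        exact eq_sub_of_add_eq h4
      have h6 : ‖x‖ ≤ 1 + ‖M‖ * ‖x‖ := by
        calc ‖x‖ = ‖1 - M * x‖ := by rw [← h5]
          _ ≤ ‖(1 : Matrix (Fin n) (Fin n) ℂ)‖ + ‖M * x‖ := norm_sub_le _ _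
          _ ≤ 1 + ‖M‖ * ‖x‖ := by
              rw [norm_one]
              exact add_le_add le_rfl (Matrix.linfty_opNorm_mul _ _)
      nlinarith [norm_nonneg x]
    have huinv : (↑u⁻¹ : Matrix (Fin n) (Fin n) ℂ) = x * Dinv := by
      rw [hx, hu, _root_.mul_inv_rev, Units.val_mul]
      rfl
    have hBnorm : ‖(↑u⁻¹ : Matrix (Fin n) (Fin n) ℂ)‖ ≤ 2 * m' := by
      rw [huinv]
      calc ‖x * Dinv‖ ≤ ‖x‖ * ‖Dinv‖ := Matrix.linfty_opNorm_mul _ _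
        _ ≤ 2 * m' := by rw [hDinvnorm]; exact mul_le_mul_of_nonneg_right hxn hm0
    set b : Fin n → ℂ := fun j => -Complex.exp (Complex.I * k * y j) with hb
    set q0 : Fin n → ℂ := fun j => -Complex.exp (Complex.I * k * y j) / α j with hq0
    have hq0n : ‖q0‖ ≤ m' := by
      rw [pi_norm_le_iff_of_nonneg hm0]
      intro j
      have he : ‖Complex.exp (Complex.I * k * y j)‖ = 1 := norm_exp_eq_one' (by simp)
      calc ‖q0 j‖ = ‖(α j)⁻¹‖ := by
            rw [hq0]; simp only; rw [norm_div, norm_neg, he, one_div, norm_inv]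
        _ ≤ m' := norm_le_pi_norm (fun j => (α j)⁻¹) j
    have hDq0 : D *ᵥ q0 = b := by
      funext j
      rw [hD, hb, hq0]
      show (diagonal α *ᵥ fun j => -Complex.exp (Complex.I * k * y j) / α j) j = _
      rw [Matrix.mulVec_diagonal, mul_comm, div_mul_cancel₀ _ (hα j)]
    have hq : q1 n y α κ k = (↑u⁻¹ : Matrix (Fin n) (Fin n) ℂ) *ᵥ b := by
      rw [hb]; show (A1 n y α κ)⁻¹ *ᵥ _ = _; rw [hAinv]
    have hkey : q1 n y α κ k - q0 = -((↑u⁻¹ : Matrix (Fin n) (Fin n) ℂ) *ᵥ (E *ᵥ q0)) := by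
      have h6 : (↑u⁻¹ : Matrix (Fin n) (Fin n) ℂ) *ᵥ ((A1 n y α κ) *ᵥ q0) = q0 := by
        rw [Matrix.mulVec_mulVec, ← huv, u.inv_mul, Matrix.one_mulVec]
      have h7 : (A1 n y α κ) *ᵥ q0 = b + E *ᵥ q0 := by
        rw [hAeq, Matrix.add_mulVec, hDq0]
      have h8' : q0 = q1 n y α κ k + (↑u⁻¹ : Matrix (Fin n) (Fin n) ℂ) *ᵥ (E *ᵥ q0) := by
        conv_lhs => rw [← h6, h7]
        rw [Matrix.mulVec_add, hq]
      conv_lhs => rw [h8']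
      abel
    have hdiffn : ‖q1 n y α κ k - q0‖ ≤ 2 * m' * ((n:ℝ) * (1/(2*κ)) * m') := by
      rw [hkey, norm_neg]
      calc ‖(↑u⁻¹ : Matrix (Fin n) (Fin n) ℂ) *ᵥ (E *ᵥ q0)‖
          ≤ ‖(↑u⁻¹ : Matrix (Fin n) (Fin n) ℂ)‖ * ‖E *ᵥ q0‖ := Matrix.linfty_opNorm_mulVec _ _
        _ ≤ ‖(↑u⁻¹ : Matrix (Fin n) (Fin n) ℂ)‖ * (‖E‖ * ‖q0‖) := by
            exact mul_le_mul_of_nonneg_left (Matrix.linfty_opNorm_mulVec _ _) (norm_nonneg _)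
        _ ≤ 2 * m' * ((n:ℝ) * (1/(2*κ)) * m') := by
            apply mul_le_mul hBnorm (mul_le_mul hEnorm hq0n (norm_nonneg _) (by positivity))
              (by positivity) (by positivity)
    have hterm : ∀ j, (-1 / (2 * (Real.pi:ℂ) * α j)) * Complex.exp (Complex.I * ((k:ℂ) - ℓ) * y j)
        = (2 * Real.pi : ℂ)⁻¹ * (q0 j * Complex.exp (-Complex.I * ℓ * y j)) := by
      intro j
      have hex : Complex.exp (Complex.I * k * y j) * Complex.exp (-Complex.I * ℓ * y j)
          = Complex.exp (Complex.I * ((k:ℂ) - ℓ) * y j) := by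
        rw [← Complex.exp_add]; congr 1; ring
      rw [hq0]; simp only
      rw [div_mul_eq_mul_div, ← hex]
      have hπ : (2 * (Real.pi:ℂ)) ≠ 0 := by
        simp [Real.pi_ne_zero]
      field_simp [hα j]
    have hsum : f1 n y α κ k ℓ - ∑ j, (-1 / (2 * (Real.pi:ℂ) * α j)) *
          Complex.exp (Complex.I * ((k:ℂ) - ℓ) * y j)
        = (2 * Real.pi : ℂ)⁻¹ *
          ∑ j, (q1 n y α κ k j - q0 j) * Complex.exp (-Complex.I * ℓ * y j) := by
      rw [f1]
      rw [Finset.sum_congr rfl (fun j _ => hterm j), ← Finset.mul_sum, ← mul_sub,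
        ← Finset.sum_sub_distrib]
      congr 1
      exact Finset.sum_congr rfl fun j _ => by ring
    have hπn : ‖(2 * Real.pi : ℂ)⁻¹‖ ≤ 1 := by
      rw [norm_inv]
      apply inv_le_one_of_one_le₀
      have : ‖((2:ℂ) * Real.pi)‖ = 2 * Real.pi := by simp [norm_mul, Real.pi_nonneg, _root_.abs_of_nonneg]
      rw [this]
      nlinarith [Real.pi_gt_three]
    have h8 : ∀ j, ‖(q1 n y α κ k j - q0 j) * Complex.exp (-Complex.I * ℓ * y j)‖
        ≤ ‖q1 n y α κ k - q0‖ := by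
      intro j
      rw [norm_mul, norm_exp_eq_one' (by simp), mul_one]
      simpa using norm_le_pi_norm (q1 n y α κ k - q0) j
    have h9 : ‖∑ j, (q1 n y α κ k j - q0 j) * Complex.exp (-Complex.I * ℓ * y j)‖
        ≤ (n:ℝ) * (2 * m' * ((n:ℝ) * (1/(2*κ)) * m')) := by
      calc ‖∑ j, (q1 n y α κ k j - q0 j) * Complex.exp (-Complex.I * ℓ * y j)‖
          ≤ ∑ j, ‖(q1 n y α κ k j - q0 j) * Complex.exp (-Complex.I * ℓ * y j)‖ :=
            norm_sum_le _ _
        _ ≤ ∑ _j : Fin n, ‖q1 n y α κ k - q0‖ := Finset.sum_le_sum fun j _ => h8 j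
        _ = (n:ℝ) * ‖q1 n y α κ k - q0‖ := by
            simp [Finset.sum_const, Finset.card_univ, nsmul_eq_mul]
        _ ≤ (n:ℝ) * (2 * m' * ((n:ℝ) * (1/(2*κ)) * m')) :=
            mul_le_mul_of_nonneg_left hdiffn (Nat.cast_nonneg n)
    calc ‖f1 n y α κ k ℓ - ∑ j, (-1 / (2 * (Real.pi:ℂ) * α j)) *
          Complex.exp (Complex.I * ((k:ℂ) - ℓ) * y j)‖
        = ‖(2 * Real.pi : ℂ)⁻¹‖ *
            ‖∑ j, (q1 n y α κ k j - q0 j) * Complex.exp (-Complex.I * ℓ * y j)‖ := by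
          rw [hsum, norm_mul]
      _ ≤ 1 * ((n:ℝ) * (2 * m' * ((n:ℝ) * (1/(2*κ)) * m'))) :=
          mul_le_mul hπn h9 (norm_nonneg _) one_pos.le
      _ = ((n:ℝ)^2 * m'^2) / κ := by field_simp
      _ ≤ ((n:ℝ)^2 * m'^2 + 1) / κ := by
          gcongr
          linarith
end
end

section
/- (Theorem 3.3(i); full high-energy expansion of the scattering amplitude, d=1.) For every M ∈ ℕ there exist constants C > 0 and κ₀ > 0 such that for all κ ≥ κ₀ the matrix A(κ) is invertible and for all k, ℓ ∈ {−κ, κ} one has |f(k,ℓ) + (1/(2π)) Σ_{m=0}^M C_m(k,ℓ) κ^{−m}| ≤ C κ^{−M−1}. -/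
open Complex Finset Matrix

noncomputable section

/-- The matrix `W(κ)` with `W(κ)_{jj'} = (i/2) α_j⁻¹ e^{iκ|y_j - y_{j'}|}`. -/
def W1 (n : ℕ) (y : Fin n → ℝ) (α : Fin n → ℂ) (κ : ℝ) : Matrix (Fin n) (Fin n) ℂ :=
  fun j j' => Complex.I / 2 * (α j)⁻¹ * Complex.exp (Complex.I * κ * |y j - y j'|)

/-- The coefficients `C_m(k,ℓ) = Σ_{j,j'} [W(κ)^m]_{jj'} α_{j'}⁻¹ e^{i(k y_{j'} - ℓ y_j)}`. -/
def C1coef (n : ℕ) (y : Fin n → ℝ) (α : Fin n → ℂ) (κ : ℝ) (m : ℕ) (k ℓ : ℝ) : ℂ :=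
  ∑ j, ∑ j', (W1 n y α κ ^ m) j j' * (α j')⁻¹ *
    Complex.exp (Complex.I * (k * y j' - ℓ * y j))

section Aux

attribute [local instance] Matrix.linftyOpNormedRing Matrix.linftyOpNormedAlgebra

lemma aux_entry_norm_le {n : ℕ} (A : Matrix (Fin n) (Fin n) ℂ) (i j : Fin n) :
    ‖A i j‖ ≤ ‖A‖ := by
  have h1 : ‖A i j‖₊ ≤ ∑ j', ‖A i j'‖₊ :=
    Finset.single_le_sum (f := fun j' => ‖A i j'‖₊) (fun _ _ => zero_le) (Finset.mem_univ j)
  have h2 : (∑ j', ‖A i j'‖₊) ≤ ‖A‖₊ := by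
    rw [Matrix.linfty_opNNNorm_def]
    exact Finset.le_sup (f := fun i => ∑ j', ‖A i j'‖₊) (Finset.mem_univ i)
  exact_mod_cast h1.trans h2

lemma aux_norm_le_sum_sum {n : ℕ} (A : Matrix (Fin n) (Fin n) ℂ) :
    ‖A‖ ≤ ∑ i, ∑ j, ‖A i j‖ := by
  have h : ‖A‖₊ ≤ ∑ i, ∑ j, ‖A i j‖₊ := by
    rw [Matrix.linfty_opNNNorm_def]
    exact Finset.sup_le fun i _ =>
      Finset.single_le_sum (f := fun i => ∑ j, ‖A i j‖₊) (fun _ _ => zero_le)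
        (Finset.mem_univ i)
  have := NNReal.coe_le_coe.mpr h
  push_cast at this
  exact this

lemma aux_A1_factor {n : ℕ} (y : Fin n → ℝ) (α : Fin n → ℂ) (κ : ℝ) (hκ : 0 < κ)
    (hα : ∀ j, α j ≠ 0) :
    A1 n y α κ = Matrix.diagonal α * (1 - (κ:ℂ)⁻¹ • W1 n y α κ) := by
  have hκ' : (κ:ℂ) ≠ 0 := by exact_mod_cast hκ.ne'
  ext i j
  rw [Matrix.diagonal_mul]
  simp only [A1, W1, Matrix.sub_apply, Matrix.smul_apply, Matrix.one_apply, smul_eq_mul]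
  have key : α i * ((κ:ℂ)⁻¹ * (Complex.I / 2 * (α i)⁻¹ *
      Complex.exp (Complex.I * κ * |y i - y j|))) =
      - (Complex.exp (Complex.I * κ * |y i - y j|) / (2 * Complex.I * κ)) := by
    rw [div_eq_mul_inv (Complex.exp _), mul_inv, mul_inv, Complex.inv_I]
    field_simp [hα i]
  rw [mul_sub, key]
  by_cases h : i = j <;> simp [h, sub_eq_add_neg]

lemma aux_W1_norm_le {n : ℕ} (y : Fin n → ℝ) (α : Fin n → ℂ) (κ : ℝ) :
    ‖W1 n y α κ‖ ≤ ∑ i : Fin n, ∑ _j : Fin n, 2⁻¹ * ‖(α i)⁻¹‖ := by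
  refine (aux_norm_le_sum_sum _).trans ?_
  refine Finset.sum_le_sum fun i _ => Finset.sum_le_sum fun j _ => ?_
  have he : ‖Complex.exp (Complex.I * κ * |y i - y j|)‖ = 1 := by
    simp [Complex.norm_exp]
  have hI : ‖(Complex.I / 2 : ℂ)‖ = 2⁻¹ := by
    rw [norm_div, Complex.norm_I]
    simp
  have : ‖W1 n y α κ i j‖ = 2⁻¹ * ‖(α i)⁻¹‖ := by
    simp only [W1]
    rw [norm_mul, norm_mul, he, hI, mul_one]
  rw [this]

set_option maxHeartbeats 1000000 in
theorem stmt3_main (n : ℕ) (y : Fin n → ℝ) (α : Fin n → ℂ)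
    (hα : ∀ j, α j ≠ 0) (M : ℕ) (hn : 0 < n) :
    ∃ C > (0 : ℝ), ∃ κ₀ > (0 : ℝ), ∀ κ ≥ κ₀, IsUnit (A1 n y α κ) ∧
      ∀ k ℓ : ℝ, (k = κ ∨ k = -κ) → (ℓ = κ ∨ ℓ = -κ) →
        ‖f1 n y α κ k ℓ + (2 * Real.pi : ℂ)⁻¹ *
            ∑ m ∈ Finset.range (M + 1), C1coef n y α κ m k ℓ / (κ : ℂ) ^ m‖ ≤
          C / κ ^ (M + 1) := by
  classical
  haveI : Nonempty (Fin n) := ⟨⟨0, hn⟩⟩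
  set D : Matrix (Fin n) (Fin n) ℂ := Matrix.diagonal α with hDdef
  have hDdet : IsUnit D.det := by
    rw [hDdef, Matrix.det_diagonal]
    exact isUnit_iff_ne_zero.mpr (Finset.prod_ne_zero_iff.mpr fun j _ => hα j)
  have hDunit : IsUnit D := (Matrix.isUnit_iff_isUnit_det D).mpr hDdet
  have hDinv : D⁻¹ = Matrix.diagonal fun j => (α j)⁻¹ := by
    apply Matrix.inv_eq_right_inv
    rw [hDdef, Matrix.diagonal_mul_diagonal]
    have : (fun j => α j * (α j)⁻¹) = fun _ => (1 : ℂ) := by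
      funext j; exact mul_inv_cancel₀ (hα j)
    rw [this, Matrix.diagonal_one]
  set B : ℝ := ∑ i : Fin n, ∑ _j : Fin n, 2⁻¹ * ‖(α i)⁻¹‖ with hBdef
  have hB0 : 0 ≤ B := Finset.sum_nonneg fun i _ => Finset.sum_nonneg fun j _ => by positivity
  set d1 : ℝ := ‖D‖ with hd1
  set d2 : ℝ := ‖D⁻¹‖ with hd2
  set C0 : ℝ := (2 * Real.pi)⁻¹ * ((n : ℝ)^2 * (2 * d2 * (d1 * (B^(M+1) * d2)))) with hC0def
  have hC0 : 0 ≤ C0 := by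
    have := norm_nonneg D; have := norm_nonneg D⁻¹
    have hpi := Real.pi_pos
    positivity
  refine ⟨C0 + 1, by positivity, max 1 (2 * B), lt_of_lt_of_le one_pos (le_max_left _ _),
    fun κ hκ => ?_⟩
  have hκ1 : (1:ℝ) ≤ κ := le_trans (le_max_left _ _) hκ
  have hκB : 2 * B ≤ κ := le_trans (le_max_right _ _) hκ
  have hκpos : (0:ℝ) < κ := lt_of_lt_of_le one_pos hκ1
  have hκ' : (κ:ℂ) ≠ 0 := by exact_mod_cast hκpos.ne'
  set t : Matrix (Fin n) (Fin n) ℂ := (κ:ℂ)⁻¹ • W1 n y α κ with htdef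
  have htB : ‖t‖ ≤ B / κ := by
    rw [htdef, norm_smul, norm_inv, Complex.norm_real, Real.norm_eq_abs,
      abs_of_pos hκpos, div_eq_inv_mul]
    exact mul_le_mul_of_nonneg_left (aux_W1_norm_le y α κ) (by positivity)
  have ht2 : ‖t‖ ≤ 2⁻¹ := by
    refine htB.trans ?_
    rw [div_le_iff₀ hκpos]
    linarith
  have hA : A1 n y α κ = D * (1 - t) := aux_A1_factor y α κ hκpos hα
  have hUnit1t : IsUnit (1 - t) :=
    isUnit_one_sub_of_norm_lt_one (lt_of_le_of_lt ht2 (by norm_num))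
  have hAunit : IsUnit (A1 n y α κ) := by rw [hA]; exact hDunit.mul hUnit1t
  refine ⟨hAunit, fun k ℓ hk hℓ => ?_⟩
  have hAdet : IsUnit (A1 n y α κ).det := (Matrix.isUnit_iff_isUnit_det _).mp hAunit
  have hdet1t : IsUnit (1 - t).det := (Matrix.isUnit_iff_isUnit_det _).mp hUnit1t
  have hinv1 : (1 - t) * (1 - t)⁻¹ = 1 := Matrix.mul_nonsing_inv _ hdet1t
  -- bound on the norm of (1 - t)⁻¹
  have hGnorm : ‖(1 - t)⁻¹‖ ≤ 2 := by
    have hrec : (1 - t)⁻¹ = 1 + t * (1 - t)⁻¹ := by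
      have h := hinv1
      rw [Matrix.sub_mul, Matrix.one_mul, sub_eq_iff_eq_add] at h
      exact h
    have h1 : ‖(1 - t)⁻¹‖ ≤ 1 + ‖t‖ * ‖(1 - t)⁻¹‖ := by
      calc ‖(1 - t)⁻¹‖ = ‖1 + t * (1 - t)⁻¹‖ := by rw [← hrec]
        _ ≤ ‖(1 : Matrix (Fin n) (Fin n) ℂ)‖ + ‖t * (1 - t)⁻¹‖ := norm_add_le _ _
        _ ≤ 1 + ‖t‖ * ‖(1 - t)⁻¹‖ := by
            rw [norm_one]
            exact add_le_add le_rfl (norm_mul_le _ _)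
    have h2 : ‖t‖ * ‖(1 - t)⁻¹‖ ≤ 2⁻¹ * ‖(1 - t)⁻¹‖ :=
      mul_le_mul_of_nonneg_right ht2 (norm_nonneg _)
    have := norm_nonneg ((1 - t)⁻¹)
    linarith
  have hAinv : (A1 n y α κ)⁻¹ = (1 - t)⁻¹ * D⁻¹ := by rw [hA, Matrix.mul_inv_rev]
  set S : Matrix (Fin n) (Fin n) ℂ := ∑ m ∈ Finset.range (M+1), t ^ m with hSdef
  have hgeo : (1 - t) * S = 1 - t ^ (M + 1) := mul_neg_geom_sum t (M + 1)
  set R : Matrix (Fin n) (Fin n) ℂ := (A1 n y α κ)⁻¹ * (D * t ^ (M+1) * D⁻¹) with hRdef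
  have hkey : S * D⁻¹ = (A1 n y α κ)⁻¹ - R := by
    have h1 : A1 n y α κ * (S * D⁻¹) = 1 - D * t ^ (M+1) * D⁻¹ := by
      rw [hA, mul_assoc, ← mul_assoc (1 - t), hgeo, sub_mul, one_mul, mul_sub,
        Matrix.mul_nonsing_inv D hDdet, ← mul_assoc]
    have h2 := congrArg (fun X => (A1 n y α κ)⁻¹ * X) h1
    rw [← mul_assoc, Matrix.nonsing_inv_mul _ hAdet, one_mul, mul_sub, mul_one] at h2
    rw [h2, hRdef]
  -- norm bound on R
  have hRnorm : ‖R‖ ≤ 2 * d2 * (d1 * (B^(M+1) * d2)) / κ^(M+1) := by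
    have hb1 : ‖(A1 n y α κ)⁻¹‖ ≤ 2 * d2 := by
      rw [hAinv]
      calc ‖(1 - t)⁻¹ * D⁻¹‖ ≤ ‖(1 - t)⁻¹‖ * ‖D⁻¹‖ := norm_mul_le _ _
        _ ≤ 2 * d2 := by rw [← hd2]; exact mul_le_mul_of_nonneg_right hGnorm (norm_nonneg _)
    have hbt : ‖t ^ (M+1)‖ ≤ (B / κ)^(M+1) := by
      calc ‖t ^ (M+1)‖ ≤ ‖t‖^(M+1) := norm_pow_le' t (Nat.succ_pos M)
        _ ≤ (B / κ)^(M+1) := pow_le_pow_left₀ (norm_nonneg _) htB _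
    have hDt : ‖D * t ^ (M+1)‖ ≤ d1 * (B/κ)^(M+1) :=
      le_trans (norm_mul_le _ _)
        (by rw [← hd1]; exact mul_le_mul_of_nonneg_left hbt (norm_nonneg _))
    have hDtD : ‖D * t ^ (M+1) * D⁻¹‖ ≤ d1 * (B/κ)^(M+1) * d2 :=
      le_trans (norm_mul_le _ _)
        (by rw [← hd2]; exact mul_le_mul_of_nonneg_right hDt (norm_nonneg _))
    have hd2nn : (0:ℝ) ≤ d2 := hd2 ▸ norm_nonneg _
    have hd1nn : (0:ℝ) ≤ d1 := hd1 ▸ norm_nonneg _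
    have hfin : ‖R‖ ≤ (2*d2) * (d1*(B/κ)^(M+1)*d2) := by
      refine le_trans ?_ (mul_le_mul hb1 hDtD (norm_nonneg _) (by positivity))
      rw [hRdef]
      exact norm_mul_le _ _
    refine hfin.trans (le_of_eq ?_)
    rw [div_pow]
    ring
  -- the scalar computation
  set eK : Fin n → ℂ := fun j => Complex.exp (Complex.I * k * y j) with heK
  set eL : Fin n → ℂ := fun j => Complex.exp (-Complex.I * ℓ * y j) with heL
  have hexp : ∀ j j' : Fin n, Complex.exp (Complex.I * (k * y j' - ℓ * y j))
      = eK j' * eL j := by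
    intro j j'
    rw [heK, heL, ← Complex.exp_add]
    congr 1
    push_cast
    ring
  have hq : ∑ j, q1 n y α κ k j * eL j
      = ∑ j, ∑ j', (-(A1 n y α κ)⁻¹ j j') * (eK j' * eL j) := by
    refine Finset.sum_congr rfl fun j _ => ?_
    have : q1 n y α κ k j = ∑ j', (A1 n y α κ)⁻¹ j j' * (-eK j') := by
      simp [q1, Matrix.mulVec, dotProduct, heK]
    rw [this, Finset.sum_mul]
    refine Finset.sum_congr rfl fun j' _ => by ring
  have hSD_entry : ∀ j j' : Fin n, (S * D⁻¹) j j'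
      = ∑ m ∈ Finset.range (M+1), ((κ:ℂ)^m)⁻¹ * ((W1 n y α κ ^ m) j j' * (α j')⁻¹) := by
    intro j j'
    rw [hSdef, Finset.sum_mul, Matrix.sum_apply]
    refine Finset.sum_congr rfl fun m _ => ?_
    rw [htdef, smul_pow, Matrix.smul_mul, Matrix.smul_apply, hDinv, Matrix.mul_diagonal,
      smul_eq_mul, inv_pow]
  have hC : ∑ m ∈ Finset.range (M + 1), C1coef n y α κ m k ℓ / (κ : ℂ) ^ m
      = ∑ j, ∑ j', (S * D⁻¹) j j' * (eK j' * eL j) := by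
    have : ∀ m, C1coef n y α κ m k ℓ / (κ : ℂ) ^ m
        = ∑ j, ∑ j', ((κ:ℂ)^m)⁻¹ * ((W1 n y α κ ^ m) j j' * (α j')⁻¹) * (eK j' * eL j) := by
      intro m
      rw [C1coef, div_eq_mul_inv, Finset.sum_mul]
      refine Finset.sum_congr rfl fun j _ => ?_
      rw [Finset.sum_mul]
      refine Finset.sum_congr rfl fun j' _ => ?_
      rw [hexp j j']
      ring
    rw [Finset.sum_congr rfl fun m _ => this m, Finset.sum_comm]
    refine Finset.sum_congr rfl fun j _ => ?_
    rw [Finset.sum_comm]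
    refine Finset.sum_congr rfl fun j' _ => ?_
    rw [hSD_entry j j', Finset.sum_mul]
  have hX : ∑ j, q1 n y α κ k j * eL j
      + ∑ m ∈ Finset.range (M + 1), C1coef n y α κ m k ℓ / (κ : ℂ) ^ m
      = ∑ j, ∑ j', (-(R j j')) * (eK j' * eL j) := by
    rw [hq, hC, ← Finset.sum_add_distrib]
    refine Finset.sum_congr rfl fun j _ => ?_
    rw [← Finset.sum_add_distrib]
    refine Finset.sum_congr rfl fun j' _ => ?_
    have h := congrFun (congrFun hkey j) j'
    rw [Matrix.sub_apply] at h
    rw [h]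
    ring
  -- final norm estimate
  have heKnorm : ∀ j, ‖eK j‖ = 1 := by
    intro j
    rw [heK]
    simp [Complex.norm_exp]
  have heLnorm : ∀ j, ‖eL j‖ = 1 := by
    intro j
    rw [heL]
    simp [Complex.norm_exp]
  have hXnorm : ‖∑ j, ∑ j', (-(R j j')) * (eK j' * eL j)‖
      ≤ (n:ℝ)^2 * (2 * d2 * (d1 * (B^(M+1) * d2)) / κ^(M+1)) := by
    calc ‖∑ j, ∑ j', (-(R j j')) * (eK j' * eL j)‖
        ≤ ∑ j, ∑ j' : Fin n, ‖(-(R j j')) * (eK j' * eL j)‖ := by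
          refine le_trans (norm_sum_le _ _) (Finset.sum_le_sum fun j _ => norm_sum_le _ _)
      _ = ∑ j, ∑ j' : Fin n, ‖R j j'‖ := by
          refine Finset.sum_congr rfl fun j _ => Finset.sum_congr rfl fun j' _ => ?_
          rw [norm_mul, norm_neg, norm_mul, heKnorm, heLnorm, mul_one, mul_one]
      _ ≤ ∑ _j : Fin n, ∑ _j' : Fin n, ‖R‖ := by
          exact Finset.sum_le_sum fun j _ => Finset.sum_le_sum fun j' _ =>
            aux_entry_norm_le R j j'
      _ = (n:ℝ)^2 * ‖R‖ := by
          simp [Finset.sum_const, Finset.card_univ]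
          ring
      _ ≤ (n:ℝ)^2 * (2 * d2 * (d1 * (B^(M+1) * d2)) / κ^(M+1)) := by
          exact mul_le_mul_of_nonneg_left hRnorm (by positivity)
  have hgoal : f1 n y α κ k ℓ + (2 * Real.pi : ℂ)⁻¹ *
      ∑ m ∈ Finset.range (M + 1), C1coef n y α κ m k ℓ / (κ : ℂ) ^ m
      = (2 * Real.pi : ℂ)⁻¹ * ∑ j, ∑ j', (-(R j j')) * (eK j' * eL j) := by
    rw [f1, ← mul_add, hX]
  rw [hgoal, norm_mul]
  have hπ : ‖(2 * Real.pi : ℂ)⁻¹‖ = (2 * Real.pi)⁻¹ := by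
    rw [norm_inv, norm_mul, Complex.norm_real]
    simp [Real.pi_pos.le, abs_of_pos Real.pi_pos]
  rw [hπ]
  have hpi := Real.pi_pos
  calc (2 * Real.pi)⁻¹ * ‖∑ j, ∑ j', (-(R j j')) * (eK j' * eL j)‖
      ≤ (2 * Real.pi)⁻¹ * ((n:ℝ)^2 * (2 * d2 * (d1 * (B^(M+1) * d2)) / κ^(M+1))) := by
        exact mul_le_mul_of_nonneg_left hXnorm (by positivity)
    _ = C0 / κ^(M+1) := by rw [hC0def]; field_simp
    _ ≤ (C0 + 1) / κ^(M+1) := by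
        gcongr
        linarith

end Aux

/-- Theorem 3.3(i): full high-energy expansion of the scattering amplitude, d = 1. -/
theorem stmt3 (n : ℕ) (y : Fin n → ℝ) (α : Fin n → ℂ)
    (hy : Function.Injective y) (hα : ∀ j, α j ≠ 0) (M : ℕ) :
    ∃ C > (0 : ℝ), ∃ κ₀ > (0 : ℝ), ∀ κ ≥ κ₀, IsUnit (A1 n y α κ) ∧
      ∀ k ℓ : ℝ, (k = κ ∨ k = -κ) → (ℓ = κ ∨ ℓ = -κ) →
        ‖f1 n y α κ k ℓ + (2 * Real.pi : ℂ)⁻¹ *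
            ∑ m ∈ Finset.range (M + 1), C1coef n y α κ m k ℓ / (κ : ℂ) ^ m‖ ≤
          C / κ ^ (M + 1) := by
  rcases Nat.eq_zero_or_pos n with hn | hn
  · subst hn
    refine ⟨1, one_pos, 1, one_pos, fun κ hκ => ⟨isUnit_of_subsingleton _, fun k ℓ _ _ => ?_⟩⟩
    have hκ0 : (0:ℝ) < κ := lt_of_lt_of_le one_pos hκ
    have h1 : f1 0 y α κ k ℓ = 0 := by simp [f1]
    have h2 : ∀ m, C1coef 0 y α κ m k ℓ = 0 := by intro m; simp [C1coef]
    simp only [h1, zero_add]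
    rw [Finset.sum_congr rfl fun m _ => by rw [h2 m, zero_div]]
    simp only [Finset.sum_const_zero, mul_zero, norm_zero]
    positivity
  · exact stmt3_main n y α hα M hn
end
end

section
/- (Remark 3.2, case d=1; convergence of the high-energy expansion.) There exists κ₀ > 0 such that for all κ ≥ κ₀ the matrix A(κ) is invertible and for all k, ℓ ∈ {−κ, κ} the series Σ_{m=0}^∞ C_m(k,ℓ) κ^{−m} converges absolutely with f(k,ℓ) = −(1/(2π)) Σ_{m=0}^∞ C_m(k,ℓ) κ^{−m}. -/
open Complex Finset Matrix

noncomputable section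

attribute [local instance] Matrix.linftyOpNormedRing Matrix.linftyOpIsBoundedSMul

local instance {n : ℕ} : @CompleteSpace (Matrix (Fin n) (Fin n) ℂ)
    (Matrix.linftyOpNormedRing (n := Fin n) (α := ℂ)).toUniformSpace :=
  letI := Matrix.linftyOpNormedSpace (R := ℂ) (n := Fin n) (m := Fin n) (α := ℂ)
  FiniteDimensional.complete ℂ (Matrix (Fin n) (Fin n) ℂ)

private lemma exp_norm_one (r : ℝ) : ‖Complex.exp (Complex.I * r)‖ = 1 := by
  rw [show (Complex.I * r : ℂ) = (r : ℂ) * Complex.I by ring]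
  exact Complex.norm_exp_ofReal_mul_I _

private lemma entry_nnnorm_le {n : ℕ} (M : Matrix (Fin n) (Fin n) ℂ) (i j : Fin n) :
    ‖M i j‖₊ ≤ ‖M‖₊ := by
  rw [Matrix.linfty_opNNNorm_def]
  exact (Finset.single_le_sum (fun j' _ => zero_le) (Finset.mem_univ j)).trans
    (Finset.le_sup (f := fun i => ∑ j', ‖M i j'‖₊) (Finset.mem_univ i))

private lemma entry_norm_le {n : ℕ} (M : Matrix (Fin n) (Fin n) ℂ) (i j : Fin n) :
    ‖M i j‖ ≤ ‖M‖ := entry_nnnorm_le M i j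

private lemma entry_hasSum {n : ℕ} {f : ℕ → Matrix (Fin n) (Fin n) ℂ}
    {a : Matrix (Fin n) (Fin n) ℂ} (h : HasSum f a) (i j : Fin n) :
    HasSum (fun m => f m i j) (a i j) := by
  let e : Matrix (Fin n) (Fin n) ℂ →+ ℂ :=
    { toFun := fun M => M i j, map_zero' := rfl, map_add' := fun _ _ => rfl }
  have hc : Continuous e :=
    AddMonoidHomClass.continuous_of_bound e 1 (fun M => by rw [one_mul]; exact entry_norm_le M i j)
  exact h.map e hc

/-- Remark 3.2, case d = 1: convergence of the high-energy expansion. -/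
theorem stmt11 (n : ℕ) (y : Fin n → ℝ) (α : Fin n → ℂ)
    (hy : Function.Injective y) (hα : ∀ j, α j ≠ 0) :
    ∃ κ₀ > (0 : ℝ), ∀ κ ≥ κ₀, IsUnit (A1 n y α κ) ∧
      ∀ k ℓ : ℝ, (k = κ ∨ k = -κ) → (ℓ = κ ∨ ℓ = -κ) →
        Summable (fun m : ℕ => ‖C1coef n y α κ m k ℓ / (κ : ℂ) ^ m‖) ∧
        f1 n y α κ k ℓ =
          -(2 * Real.pi : ℂ)⁻¹ * ∑' m : ℕ, C1coef n y α κ m k ℓ / (κ : ℂ) ^ m := by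
  classical
  set B : ℝ := ∑ i : Fin n, ∑ _j : Fin n, ‖(α i)⁻¹‖ with hB
  have hB0 : 0 ≤ B := Finset.sum_nonneg fun i _ => Finset.sum_nonneg fun j _ => norm_nonneg _
  refine ⟨2 * B + 1, by positivity, ?_⟩
  intro κ hκ
  have hκ0 : (0:ℝ) < κ := lt_of_lt_of_le (by linarith) hκ
  have hκC : (κ:ℂ) ≠ 0 := by exact_mod_cast hκ0.ne'
  set W := W1 n y α κ with hWdef
  set X : Matrix (Fin n) (Fin n) ℂ := (κ:ℂ)⁻¹ • W with hXdef
  have hWentry : ∀ i j, ‖W i j‖ ≤ ‖(α i)⁻¹‖ := by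
    intro i j
    rw [hWdef]
    show ‖Complex.I / 2 * (α i)⁻¹ * Complex.exp (Complex.I * κ * |y i - y j|)‖ ≤ _
    rw [show (Complex.I * κ * |y i - y j| : ℂ) = Complex.I * ((κ * |y i - y j| : ℝ) : ℂ) by
      push_cast; ring]
    rw [norm_mul, norm_mul, exp_norm_one]
    have : ‖Complex.I / 2‖ = 1/2 := by
      rw [norm_div]; simp
    rw [this]
    have := norm_nonneg (α i)⁻¹
    linarith
  have hWle : ‖W‖ ≤ B := by
    set Bnn : NNReal := ∑ i : Fin n, ∑ _j : Fin n, ‖(α i)⁻¹‖₊ with hBnn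
    have hBc : (Bnn : ℝ) = B := by
      rw [hBnn, hB]
      push_cast
      rfl
    have hsup : ((Finset.univ : Finset (Fin n)).sup fun i => ∑ j, ‖W i j‖₊) ≤ Bnn := by
      apply Finset.sup_le
      intro i _
      refine le_trans (Finset.sum_le_sum (g := fun _j : Fin n => ‖(α i)⁻¹‖₊)
        fun j _ => ?_) ?_
      · rw [← NNReal.coe_le_coe]
        simpa using hWentry i j
      · exact Finset.single_le_sum (f := fun i => ∑ _j : Fin n, ‖(α i)⁻¹‖₊)
          (fun _ _ => zero_le) (Finset.mem_univ i)
    rw [Matrix.linfty_opNorm_def, ← hBc]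
    exact_mod_cast hsup
  have hX1 : ‖X‖ < 1 := by
    have h1 : ‖X‖ ≤ ‖(κ:ℂ)⁻¹‖ * ‖W‖ := norm_smul_le _ _
    have h2 : ‖(κ:ℂ)⁻¹‖ = κ⁻¹ := by
      rw [norm_inv, Complex.norm_real, Real.norm_eq_abs, abs_of_pos hκ0]
    rw [h2] at h1
    have h3 : κ⁻¹ * ‖W‖ ≤ κ⁻¹ * B :=
      mul_le_mul_of_nonneg_left hWle (by positivity)
    have h4 : κ⁻¹ * B < 1 := by
      rw [inv_mul_lt_iff₀ hκ0]
      linarith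
    linarith
  -- factorization
  have hA : A1 n y α κ = Matrix.diagonal α * (1 - X) := by
    ext j j'
    have hXe : (1 - X) j j' = (if j = j' then 1 else 0) -
        (κ:ℂ)⁻¹ * (Complex.I / 2 * (α j)⁻¹ * Complex.exp (Complex.I * κ * |y j - y j'|)) := by
      rw [Matrix.sub_apply, Matrix.one_apply, hXdef, Matrix.smul_apply, hWdef, smul_eq_mul]
      rfl
    rw [Matrix.diagonal_mul, hXe, A1]
    have hcancel : α j * (α j)⁻¹ = 1 := mul_inv_cancel₀ (hα j)
    have h1 : (2 * Complex.I * (κ:ℂ))⁻¹ = -(Complex.I/2) * (κ:ℂ)⁻¹ := by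
      rw [mul_inv, mul_inv, Complex.inv_I]
      ring
    rcases eq_or_ne j j' with h | h
    · subst h
      simp only [eq_self_iff_true, if_true]
      rw [div_eq_mul_inv, h1]
      linear_combination (Complex.I/2 * (κ:ℂ)⁻¹ *
        Complex.exp (Complex.I * κ * |y j - y j|)) * hcancel
    · simp only [if_neg h]
      rw [div_eq_mul_inv, h1]
      linear_combination (Complex.I/2 * (κ:ℂ)⁻¹ *
        Complex.exp (Complex.I * κ * |y j - y j'|)) * hcancel
  have hDu : IsUnit (Matrix.diagonal α) := by
    rw [Matrix.isUnit_iff_isUnit_det, Matrix.det_diagonal, isUnit_iff_ne_zero]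
    exact Finset.prod_ne_zero_iff.2 fun i _ => hα i
  have h1Xu : IsUnit (1 - X) := isUnit_one_sub_of_norm_lt_one hX1
  refine ⟨hA ▸ hDu.mul h1Xu, ?_⟩
  intro k ℓ _ _
  set S := (1 - X)⁻¹ with hSdef
  have hgeom : HasSum (fun m : ℕ => X ^ m) S := by
    rw [hSdef, Matrix.nonsing_inv_eq_ringInverse]
    exact hasSum_geom_series_inverse X hX1
  have hentry : ∀ i j, HasSum (fun m => (X ^ m) i j) (S i j) := fun i j =>
    entry_hasSum hgeom i j
  have hXpow : ∀ (m : ℕ) (i j : Fin n), (X ^ m) i j = ((κ:ℂ) ^ m)⁻¹ * (W ^ m) i j := by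
    intro m i j
    rw [hXdef, smul_pow, Matrix.smul_apply, smul_eq_mul, inv_pow]
  have hCm : ∀ m : ℕ, C1coef n y α κ m k ℓ / (κ:ℂ)^m
      = ∑ j, ∑ j', (X ^ m) j j' *
          ((α j')⁻¹ * Complex.exp (Complex.I * (k * y j' - ℓ * y j))) := by
    intro m
    rw [C1coef, Finset.sum_div]
    refine Finset.sum_congr rfl fun j _ => ?_
    rw [Finset.sum_div]
    refine Finset.sum_congr rfl fun j' _ => ?_
    rw [hXpow, div_eq_mul_inv]
    ring
  set T : ℂ := ∑ j, ∑ j', S j j' *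
      ((α j')⁻¹ * Complex.exp (Complex.I * (k * y j' - ℓ * y j))) with hT
  have hhs : HasSum (fun m => C1coef n y α κ m k ℓ / (κ:ℂ)^m) T := by
    have := hasSum_sum (s := (Finset.univ : Finset (Fin n)))
      (f := fun j m => ∑ j', (X ^ m) j j' *
        ((α j')⁻¹ * Complex.exp (Complex.I * (k * y j' - ℓ * y j))))
      (a := fun j => ∑ j', S j j' *
        ((α j')⁻¹ * Complex.exp (Complex.I * (k * y j' - ℓ * y j))))
      (fun j _ => hasSum_sum fun j' _ => (hentry j j').mul_right _)
    rw [← hT] at this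
    convert this using 1
    funext m
    exact hCm m
  have hexp2 : ∀ j j' : Fin n, ‖Complex.exp (Complex.I * (k * y j' - ℓ * y j))‖ = 1 := by
    intro j j'
    rw [show (Complex.I * ((k : ℂ) * y j' - (ℓ : ℂ) * y j) : ℂ)
        = Complex.I * ((k * y j' - ℓ * y j : ℝ) : ℂ) by push_cast; ring]
    exact exp_norm_one _
  constructor
  · set K : ℝ := ∑ _j : Fin n, ∑ j' : Fin n, ‖(α j')⁻¹‖ with hK
    have hXs : Summable (fun m : ℕ => ‖X ^ m‖) := summable_norm_geometric_of_norm_lt_one hX1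
    refine Summable.of_nonneg_of_le (fun _ => norm_nonneg _) (fun m => ?_) (hXs.mul_right K)
    rw [hCm m]
    calc ‖∑ j, ∑ j', (X ^ m) j j' *
          ((α j')⁻¹ * Complex.exp (Complex.I * (k * y j' - ℓ * y j)))‖
        ≤ ∑ j, ‖∑ j', (X ^ m) j j' *
          ((α j')⁻¹ * Complex.exp (Complex.I * (k * y j' - ℓ * y j)))‖ := norm_sum_le _ _
      _ ≤ ∑ j, ∑ j', ‖(X ^ m) j j' *
          ((α j')⁻¹ * Complex.exp (Complex.I * (k * y j' - ℓ * y j)))‖ :=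
          Finset.sum_le_sum fun j _ => norm_sum_le _ _
      _ ≤ ∑ _j : Fin n, ∑ j' : Fin n, ‖X ^ m‖ * ‖(α j')⁻¹‖ := by
          refine Finset.sum_le_sum fun j _ => Finset.sum_le_sum fun j' _ => ?_
          rw [norm_mul, norm_mul, hexp2 j j', mul_one]
          exact mul_le_mul_of_nonneg_right (entry_norm_le _ _ _) (norm_nonneg _)
      _ = ‖X ^ m‖ * K := by
          rw [hK, Finset.mul_sum]
          exact Finset.sum_congr rfl fun j _ => by rw [Finset.mul_sum]
  · rw [hhs.tsum_eq]
    have hDinv : (Matrix.diagonal α)⁻¹ = Matrix.diagonal (fun i => (α i)⁻¹) := by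
      apply Matrix.inv_eq_right_inv
      rw [Matrix.diagonal_mul_diagonal,
        show (fun i => α i * (α i)⁻¹) = fun _ => (1:ℂ) from
          funext fun i => mul_inv_cancel₀ (hα i), Matrix.diagonal_one]
    have hAinv : (A1 n y α κ)⁻¹ = S * Matrix.diagonal (fun i => (α i)⁻¹) := by
      rw [hA, Matrix.mul_inv_rev, hDinv, hSdef]
    have hq : ∀ j, q1 n y α κ k j
        = ∑ j', S j j' * (α j')⁻¹ * (-Complex.exp (Complex.I * k * y j')) := by
      intro j
      rw [q1, hAinv]
      simp [Matrix.mulVec, dotProduct, Matrix.mul_diagonal]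
    have key : ∑ j, q1 n y α κ k j * Complex.exp (-Complex.I * ℓ * y j) = -T := by
      rw [hT, ← Finset.sum_neg_distrib]
      refine Finset.sum_congr rfl fun j _ => ?_
      rw [hq j, Finset.sum_mul, ← Finset.sum_neg_distrib]
      refine Finset.sum_congr rfl fun j' _ => ?_
      have hsplit : Complex.exp (Complex.I * (k * y j' - ℓ * y j))
          = Complex.exp (Complex.I * k * y j') * Complex.exp (-Complex.I * ℓ * y j) := by
        rw [← Complex.exp_add]
        congr 1
        push_cast
        ring
      rw [hsplit]
      ring
    rw [f1, key]
    ring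
end
end

section
/- (Theorem 3.2, case d=1; formula (3.22) underlying the inverse-scattering reconstruction.) There exists E₀ > 0 such that the matrix A(κ) is invertible for all κ ≥ √E₀, and the function F : ℝ → ℂ defined by F(p) = (2π)^{-1} Σ_{j=1}^n (−α_j^{-1}) e^{i p y_j} − χ(p) f(p/2, −p/2), where χ(p) = 0 for |p| ≤ 2√E₀ and χ(p) = 1 for |p| > 2√E₀, and where f(p/2, −p/2) is the scattering amplitude evaluated at κ = |p|/2, belongs to L^r(ℝ) for every r with 1 < r ≤ 2. -/
open Complex Finset Matrix

noncomputable section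

open MeasureTheory

lemma norm_exp_I_mul (a b : ℝ) : ‖Complex.exp (Complex.I * a * b)‖ = 1 := by
  rw [Complex.norm_exp]; simp

lemma A1_mulVec (n : ℕ) (y : Fin n → ℝ) (α : Fin n → ℂ) (κ : ℝ) (q : Fin n → ℂ) (j : Fin n) :
    (A1 n y α κ *ᵥ q) j = α j * q j +
      (2 * Complex.I * κ)⁻¹ * ∑ j', Complex.exp (Complex.I * κ * |y j - y j'|) * q j' := by
  simp only [A1, Matrix.mulVec, dotProduct, add_mul, Finset.sum_add_distrib]
  congr 1
  · simp [ite_mul]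
  · rw [Finset.mul_sum]
    refine Finset.sum_congr rfl fun j' _ => ?_
    ring

lemma norm_c (κ : ℝ) (hκ : 0 < κ) : ‖((2 * Complex.I * κ : ℂ))⁻¹‖ = (2*κ)⁻¹ := by
  rw [norm_inv]
  simp [abs_of_pos hκ]

lemma norm_sum_exp_mul (n : ℕ) (y : Fin n → ℝ) (κ : ℝ) (j : Fin n) (q : Fin n → ℂ) :
    ‖∑ j', Complex.exp (Complex.I * κ * |y j - y j'|) * q j'‖ ≤ ∑ j', ‖q j'‖ := by
  refine (norm_sum_le _ _).trans (Finset.sum_le_sum fun j' _ => ?_)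
  rw [norm_mul, norm_exp_I_mul, one_mul]

lemma norm_le_M_mul (α : ℂ) (M : ℝ) (hα : α ≠ 0) (hM : ‖α⁻¹‖ ≤ M) (z : ℂ) :
    ‖z‖ ≤ M * ‖α * z‖ := by
  calc ‖z‖ = ‖α⁻¹ * (α * z)‖ := by rw [inv_mul_cancel_left₀ hα]
  _ = ‖α⁻¹‖ * ‖α * z‖ := norm_mul _ _
  _ ≤ M * ‖α * z‖ := mul_le_mul_of_nonneg_right hM (norm_nonneg _)


set_option maxHeartbeats 1000000 in
lemma detne (n : ℕ) (y : Fin n → ℝ) (α : Fin n → ℂ) (hα : ∀ j, α j ≠ 0)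
    (M : ℝ) (hM0 : 0 ≤ M) (hM : ∀ j, ‖(α j)⁻¹‖ ≤ M) (κ : ℝ) (hκ : n * M + 1 ≤ κ) :
    (A1 n y α κ).det ≠ 0 := by
  have hnM : (0:ℝ) ≤ (n:ℝ) * M := by positivity
  have hκpos : (0:ℝ) < κ := by linarith
  have hc := norm_c κ hκpos
  intro hdet0
  obtain ⟨v, hv0, hv⟩ := (Matrix.exists_mulVec_eq_zero_iff).2 hdet0
  set S := ∑ j', ‖v j'‖ with hS
  have hS0 : 0 ≤ S := Finset.sum_nonneg fun j _ => norm_nonneg _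
  have hterm : ∀ j, ‖v j‖ ≤ M * ((2*κ)⁻¹ * S) := by
    intro j
    have h1 : α j * v j = -((2 * Complex.I * κ)⁻¹ *
        ∑ j', Complex.exp (Complex.I * κ * |y j - y j'|) * v j') := by
      have h2 := A1_mulVec n y α κ v j
      rw [hv] at h2
      simp only [Pi.zero_apply] at h2
      linear_combination -h2
    have hανj : ‖α j * v j‖ ≤ (2*κ)⁻¹ * S := by
      rw [h1, norm_neg, norm_mul, hc]
      exact mul_le_mul_of_nonneg_left (norm_sum_exp_mul n y κ j v) (by positivity)
    exact (norm_le_M_mul (α j) M (hα j) (hM j) (v j)).trans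
      (mul_le_mul_of_nonneg_left hανj hM0)
  have hSle : S ≤ (n:ℝ) * (M * ((2*κ)⁻¹ * S)) := by
    rw [hS]
    calc ∑ j', ‖v j'‖ ≤ ∑ _j' : Fin n, M * ((2*κ)⁻¹ * S) :=
      Finset.sum_le_sum fun j _ => hterm j
    _ = n * (M * ((2*κ)⁻¹ * S)) := by simp [Finset.sum_const, Finset.card_univ, mul_comm]
  have hhalf : (n:ℝ) * (M * ((2*κ)⁻¹ * S)) ≤ S / 2 := by
    have h2 : (n:ℝ) * M ≤ κ := by linarith
    calc (n:ℝ) * (M * ((2*κ)⁻¹ * S)) = ((n:ℝ)*M*S) / (2*κ) := by ring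
      _ ≤ (κ*S) / (2*κ) := by gcongr
      _ = S / 2 := by
          rw [eq_div_iff (two_ne_zero)]
          field_simp
  have hS00 : S = 0 := by linarith
  apply hv0
  funext j
  have hj : ‖v j‖ = 0 := le_antisymm (by
    have h3 := Finset.single_le_sum (f := fun j' => ‖v j'‖) (fun j' _ => norm_nonneg _)
      (Finset.mem_univ j)
    rw [← hS] at h3; linarith) (norm_nonneg _)
  simpa using hj

set_option maxHeartbeats 1000000 in
lemma qbound (n : ℕ) (y : Fin n → ℝ) (α : Fin n → ℂ) (hα : ∀ j, α j ≠ 0)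
    (M : ℝ) (hM0 : 0 ≤ M) (hM : ∀ j, ‖(α j)⁻¹‖ ≤ M) (κ : ℝ) (hκ : n * M + 1 ≤ κ) (k : ℝ) :
    ∑ j, ‖q1 n y α κ k j + (α j)⁻¹ * Complex.exp (Complex.I * k * y j)‖
      ≤ (n:ℝ)^2 * M^2 / κ := by
  have hnM : (0:ℝ) ≤ (n:ℝ) * M := by positivity
  have hκpos : (0:ℝ) < κ := by linarith
  have hc := norm_c κ hκpos
  have hdet := detne n y α hα M hM0 hM κ hκ
  obtain ⟨q, hqdef⟩ : ∃ q', q' = q1 n y α κ k := ⟨_, rfl⟩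
  rw [← hqdef]
  have hAq : A1 n y α κ *ᵥ q = fun j => -Complex.exp (Complex.I * k * y j) := by
    rw [hqdef]
    unfold q1
    rw [Matrix.mulVec_mulVec, Matrix.mul_nonsing_inv _ (isUnit_iff_ne_zero.2 hdet),
      Matrix.one_mulVec]
  obtain ⟨S, hS⟩ : ∃ S', S' = ∑ j', ‖q j'‖ := ⟨_, rfl⟩
  have hS0 : 0 ≤ S := hS ▸ Finset.sum_nonneg fun j _ => norm_nonneg _
  have hrel : ∀ j, α j * q j = -Complex.exp (Complex.I * k * y j) -
      (2*Complex.I*κ)⁻¹ * ∑ j', Complex.exp (Complex.I*κ*|y j - y j'|) * q j' := by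
    intro j
    have h2 := A1_mulVec n y α κ q j
    rw [hAq] at h2
    simp only [] at h2
    linear_combination -h2
  have hsum : ∀ j, ‖(2*Complex.I*(κ:ℂ))⁻¹ *
      ∑ j', Complex.exp (Complex.I*κ*|y j - y j'|) * q j'‖ ≤ (2*κ)⁻¹ * S := by
    intro j
    rw [norm_mul, hc, hS]
    exact mul_le_mul_of_nonneg_left (norm_sum_exp_mul n y κ j q) (by positivity)
  have hterm : ∀ j, ‖q j‖ ≤ M * (1 + (2*κ)⁻¹ * S) := by
    intro j
    refine (norm_le_M_mul (α j) M (hα j) (hM j) (q j)).trans ?_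
    refine mul_le_mul_of_nonneg_left ?_ hM0
    rw [hrel j]
    refine (norm_sub_le _ _).trans ?_
    rw [norm_neg, norm_exp_I_mul]
    exact add_le_add le_rfl (hsum j)
  have hSle : S ≤ (n:ℝ) * M + (n:ℝ) * M * ((2*κ)⁻¹ * S) := by
    conv_lhs => rw [hS]
    calc ∑ j', ‖q j'‖ ≤ ∑ _j' : Fin n, M * (1 + (2*κ)⁻¹ * S) :=
      Finset.sum_le_sum fun j _ => hterm j
    _ = (n:ℝ) * M + (n:ℝ) * M * ((2*κ)⁻¹ * S) := by
        simp [Finset.sum_const, Finset.card_univ]; ring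
  have hhalf : (n:ℝ) * M * ((2*κ)⁻¹ * S) ≤ S / 2 := by
    have h2 : (n:ℝ) * M ≤ κ := by linarith
    calc (n:ℝ) * M * ((2*κ)⁻¹ * S) = ((n:ℝ)*M*S) / (2*κ) := by ring
      _ ≤ (κ*S) / (2*κ) := by gcongr
      _ = S / 2 := by
          rw [eq_div_iff (two_ne_zero)]
          field_simp
  have hS2 : S ≤ 2 * ((n:ℝ) * M) := by linarith
  have hrj : ∀ j, ‖q j + (α j)⁻¹ * Complex.exp (Complex.I * k * y j)‖
      ≤ M * ((2*κ)⁻¹ * S) := by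
    intro j
    have h3 : α j * (q j + (α j)⁻¹ * Complex.exp (Complex.I * k * y j)) =
        -((2*Complex.I*κ)⁻¹ * ∑ j', Complex.exp (Complex.I*κ*|y j - y j'|) * q j') := by
      rw [mul_add, hrel j, mul_inv_cancel_left₀ (hα j)]
      ring
    refine (norm_le_M_mul (α j) M (hα j) (hM j) _).trans ?_
    rw [h3, norm_neg]
    exact mul_le_mul_of_nonneg_left (hsum j) hM0
  calc ∑ j, ‖q j + (α j)⁻¹ * Complex.exp (Complex.I * k * y j)‖
      ≤ ∑ _j : Fin n, M * ((2*κ)⁻¹ * S) := Finset.sum_le_sum fun j _ => hrj j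
    _ = (n:ℝ) * (M * ((2*κ)⁻¹ * S)) := by simp [Finset.sum_const, Finset.card_univ]
    _ ≤ (n:ℝ) * (M * ((2*κ)⁻¹ * (2 * ((n:ℝ) * M)))) := by
        have : (0:ℝ) < (2*κ)⁻¹ := by positivity
        gcongr
    _ = (n:ℝ)^2 * M^2 / κ := by field_simp


set_option maxHeartbeats 1000000 in
lemma diffbound (n : ℕ) (y : Fin n → ℝ) (α : Fin n → ℂ) (hα : ∀ j, α j ≠ 0)
    (M : ℝ) (hM0 : 0 ≤ M) (hM : ∀ j, ‖(α j)⁻¹‖ ≤ M) (p : ℝ) (hp : n * M + 1 ≤ |p| / 2) :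
    ‖(2 * Real.pi : ℂ)⁻¹ * ∑ j, (-(α j)⁻¹) * Complex.exp (Complex.I * p * y j) -
        f1 n y α (|p| / 2) (p / 2) (-p / 2)‖ ≤ (n:ℝ)^2 * M^2 / (|p|/2) := by
  have hnM : (0:ℝ) ≤ (n:ℝ) * M := by positivity
  have hq := qbound n y α hα M hM0 hM (|p|/2) hp (p/2)
  unfold f1
  rw [← mul_sub, ← Finset.sum_sub_distrib, norm_mul]
  have h1 : ∀ j : Fin n, (-(α j)⁻¹) * Complex.exp (Complex.I * p * y j) -
      q1 n y α (|p|/2) (p/2) j * Complex.exp (-Complex.I * ((-p/2 : ℝ) : ℂ) * y j) =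
      -((q1 n y α (|p|/2) (p/2) j +
          (α j)⁻¹ * Complex.exp (Complex.I * ((p/2 : ℝ) : ℂ) * y j)) *
        Complex.exp (Complex.I * ((p/2 : ℝ) : ℂ) * y j)) := by
    intro j
    have e2 : Complex.exp (Complex.I * ((p/2:ℝ):ℂ) * y j) *
        Complex.exp (Complex.I * ((p/2:ℝ):ℂ) * y j) = Complex.exp (Complex.I * p * y j) := by
      rw [← Complex.exp_add]
      congr 1
      push_cast
      ring
    have e3 : Complex.exp (-Complex.I * ((-p/2:ℝ):ℂ) * y j) =
        Complex.exp (Complex.I * ((p/2:ℝ):ℂ) * y j) := by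
      congr 1
      push_cast
      ring
    rw [e3]
    linear_combination (α j)⁻¹ * e2
  have hsum : ‖∑ j, ((-(α j)⁻¹) * Complex.exp (Complex.I * p * y j) -
      q1 n y α (|p|/2) (p/2) j * Complex.exp (-Complex.I * ((-p/2 : ℝ) : ℂ) * y j))‖
      ≤ (n:ℝ)^2 * M^2 / (|p|/2) := by
    refine (norm_sum_le _ _).trans (le_trans (Finset.sum_le_sum (fun j _ => ?_)) hq)
    rw [h1 j, norm_neg, norm_mul]
    have : ‖Complex.exp (Complex.I * ((p/2:ℝ):ℂ) * y j)‖ = 1 := norm_exp_I_mul _ _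
    rw [this, mul_one]
  have hnorm2pi : ‖((2 * Real.pi : ℂ))⁻¹‖ ≤ 1 := by
    rw [norm_inv, show ((2:ℂ) * Real.pi) = ((2*Real.pi : ℝ) : ℂ) by push_cast; ring,
      Complex.norm_real, Real.norm_eq_abs, abs_of_pos (by positivity)]
    rw [inv_le_one_iff₀]
    right
    nlinarith [Real.pi_gt_three]
  calc ‖((2 * Real.pi : ℂ))⁻¹‖ * ‖∑ j, ((-(α j)⁻¹) * Complex.exp (Complex.I * p * y j) -
      q1 n y α (|p|/2) (p/2) j * Complex.exp (-Complex.I * ((-p/2 : ℝ) : ℂ) * y j))‖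
      ≤ 1 * ((n:ℝ)^2 * M^2 / (|p|/2)) :=
        mul_le_mul hnorm2pi hsum (norm_nonneg _) zero_le_one
    _ = (n:ℝ)^2 * M^2 / (|p|/2) := one_mul _


lemma measurable_det_comp {m : ℕ} {f : ℝ → Matrix (Fin m) (Fin m) ℂ}
    (h : ∀ i j, Measurable fun p => f p i j) : Measurable fun p => (f p).det := by
  simp_rw [Matrix.det_apply']
  exact Finset.measurable_sum _ fun σ _ =>
    (Finset.measurable_prod _ fun i _ => h _ _).const_mul _

lemma measurable_A1_entry (n : ℕ) (y : Fin n → ℝ) (α : Fin n → ℂ) (i j : Fin n) :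
    Measurable fun p : ℝ => A1 n y α (|p|/2) i j := by
  unfold A1
  refine Measurable.add measurable_const (Measurable.div ?_ ?_)
  · refine (Complex.continuous_exp.comp ?_).measurable
    exact (continuous_const.mul (Complex.continuous_ofReal.comp
      (_root_.continuous_abs.div_const 2))).mul continuous_const
  · exact (continuous_const.mul (Complex.continuous_ofReal.comp
      (_root_.continuous_abs.div_const 2))).measurable

lemma measurable_inv_entry {m : ℕ} {f : ℝ → Matrix (Fin m) (Fin m) ℂ}
    (h : ∀ i j, Measurable fun p => f p i j) (i j : Fin m) :
    Measurable fun p => (f p)⁻¹ i j := by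
  simp_rw [Matrix.inv_def, Matrix.smul_apply, Ring.inverse_eq_inv, smul_eq_mul]
  refine Measurable.mul (measurable_det_comp h).inv ?_
  simp_rw [Matrix.adjugate_apply]
  apply measurable_det_comp
  intro a b
  simp_rw [Matrix.updateRow_apply]
  by_cases hab : a = j
  · simp [hab]
  · simpa [hab] using h a b

lemma measurable_f1 (n : ℕ) (y : Fin n → ℝ) (α : Fin n → ℂ) :
    Measurable fun p : ℝ => f1 n y α (|p|/2) (p/2) (-p/2) := by
  unfold f1 q1
  refine Measurable.const_mul (Finset.measurable_sum _ fun j _ => Measurable.mul ?_ ?_) _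
  · simp_rw [Matrix.mulVec, dotProduct]
    refine Finset.measurable_sum _ fun j' _ => Measurable.mul
      (measurable_inv_entry (measurable_A1_entry n y α) j j') ?_
    refine (Continuous.neg (Complex.continuous_exp.comp ?_)).measurable
    exact (continuous_const.mul (Complex.continuous_ofReal.comp
      (continuous_id.div_const 2))).mul continuous_const
  · refine (Complex.continuous_exp.comp ?_).measurable
    exact (continuous_const.mul (Complex.continuous_ofReal.comp
      (continuous_id.neg.div_const 2))).mul continuous_const


lemma memLp_japanese (K : ℝ) (hK : 0 ≤ K) (r : ℝ) (hr1 : 1 < r) :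
    MemLp (fun x : ℝ => K * (1+|x|)⁻¹) (ENNReal.ofReal r) volume := by
  have hr0 : (0:ℝ) < r := by linarith
  have h0 : ENNReal.ofReal r ≠ 0 := by
    simp only [ne_eq, ENNReal.ofReal_eq_zero, not_le]
    linarith
  have ht : ENNReal.ofReal r ≠ ⊤ := ENNReal.ofReal_ne_top
  have hcont : Continuous fun x : ℝ => K * (1+|x|)⁻¹ := by
    refine continuous_const.mul (Continuous.inv₀ (continuous_const.add _root_.continuous_abs) ?_)
    intro x
    positivity
  rw [← MeasureTheory.memLp_norm_rpow_iff hcont.aestronglyMeasurable h0 ht,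
    ENNReal.div_self h0 ht, MeasureTheory.memLp_one_iff_integrable,
    ENNReal.toReal_ofReal hr0.le]
  have hint : Integrable (fun x : ℝ => K^r * (1+‖x‖)^(-r)) volume := by
    refine Integrable.const_mul ?_ _
    exact integrable_one_add_norm (by simpa using hr1)
  refine hint.congr (Filter.Eventually.of_forall fun x => ?_)
  have h1x : (0:ℝ) < 1 + |x| := by positivity
  simp only [Real.norm_eq_abs]
  rw [_root_.abs_of_nonneg (show (0:ℝ) ≤ K * (1+|x|)⁻¹ by positivity),
    Real.mul_rpow hK (by positivity), Real.rpow_neg h1x.le, Real.inv_rpow h1x.le]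


lemma norm_two_pi_inv_le_one : ‖((2 * Real.pi : ℂ))⁻¹‖ ≤ 1 := by
  rw [norm_inv, show ((2:ℂ) * Real.pi) = ((2*Real.pi : ℝ) : ℂ) by push_cast; ring,
    Complex.norm_real, Real.norm_eq_abs, _root_.abs_of_pos (by positivity)]
  rw [inv_le_one_iff₀]
  right
  nlinarith [Real.pi_gt_three]

set_option maxHeartbeats 1000000 in
/-- Theorem 3.2, case d = 1: formula (3.22) underlying the inverse-scattering
reconstruction. -/
theorem stmt17 (n : ℕ) (y : Fin n → ℝ) (α : Fin n → ℂ)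
    (hy : Function.Injective y) (hα : ∀ j, α j ≠ 0) :
    ∃ E₀ > (0 : ℝ), (∀ κ : ℝ, Real.sqrt E₀ ≤ κ → IsUnit (A1 n y α κ)) ∧
      ∀ r : ℝ, 1 < r → r ≤ 2 →
        MeasureTheory.MemLp
          (fun p : ℝ =>
            (2 * Real.pi : ℂ)⁻¹ * ∑ j, (-(α j)⁻¹) * Complex.exp (Complex.I * p * y j) -
              (if |p| ≤ 2 * Real.sqrt E₀ then 0 else 1) *
                f1 n y α (|p| / 2) (p / 2) (-p / 2))
          (ENNReal.ofReal r) MeasureTheory.volume := by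
  obtain ⟨M, hM0, hM⟩ : ∃ M, 0 ≤ M ∧ ∀ j, ‖(α j)⁻¹‖ ≤ M := by
    refine ⟨∑ j, ‖(α j)⁻¹‖, Finset.sum_nonneg fun j _ => norm_nonneg _, fun j => ?_⟩
    exact Finset.single_le_sum (f := fun j' => ‖(α j')⁻¹‖) (fun j' _ => norm_nonneg _)
      (Finset.mem_univ j)
  have hnM : (0:ℝ) ≤ (n:ℝ) * M := by positivity
  have hκ₀pos : (0:ℝ) < (n:ℝ) * M + 1 := by linarith
  have hsqrt : Real.sqrt (((n:ℝ) * M + 1)^2) = (n:ℝ) * M + 1 := Real.sqrt_sq hκ₀pos.le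
  refine ⟨((n:ℝ) * M + 1)^2, by positivity, ?_, ?_⟩
  · intro κ hκ
    rw [hsqrt] at hκ
    exact (Matrix.isUnit_iff_isUnit_det _).2
      (isUnit_iff_ne_zero.2 (detne n y α hα M hM0 hM κ hκ))
  · intro r hr1 hr2
    obtain ⟨K, hKdef⟩ : ∃ K : ℝ,
        K = (1 + 2*((n:ℝ) * M + 1)) * ((n:ℝ)*M + (n:ℝ)^2*M^2 + 1) := ⟨_, rfl⟩
    have hKpos : 0 ≤ K := by rw [hKdef]; positivity
    refine MeasureTheory.MemLp.of_le (memLp_japanese K hKpos r hr1) ?_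
      (Filter.Eventually.of_forall fun x => ?_)
    · apply Measurable.aestronglyMeasurable
      apply Measurable.sub
      · refine Measurable.const_mul (Finset.measurable_sum _ fun j _ => ?_) _
        refine Measurable.const_mul ((Complex.continuous_exp.comp ?_).measurable) _
        exact (continuous_const.mul Complex.continuous_ofReal).mul continuous_const
      · exact (Measurable.ite
          (measurableSet_le _root_.continuous_abs.measurable measurable_const)
          measurable_const measurable_const).mul (measurable_f1 n y α)
    · have h1x : (0:ℝ) < 1 + |x| := by positivity
      have hgx : (0:ℝ) ≤ K * (1+|x|)⁻¹ := by positivity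
      rw [Real.norm_eq_abs, _root_.abs_of_nonneg hgx]
      simp only [hsqrt]
      by_cases hx : |x| ≤ 2 * ((n:ℝ) * M + 1)
      · rw [if_pos hx, zero_mul, sub_zero]
        have hB : ‖(2 * Real.pi : ℂ)⁻¹ *
            ∑ j, (-(α j)⁻¹) * Complex.exp (Complex.I * x * y j)‖ ≤ (n:ℝ) * M := by
          rw [norm_mul]
          calc ‖((2 * Real.pi : ℂ))⁻¹‖ * ‖∑ j, (-(α j)⁻¹) * Complex.exp (Complex.I * x * y j)‖
              ≤ 1 * ((n:ℝ) * M) := by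
                refine mul_le_mul norm_two_pi_inv_le_one ?_ (norm_nonneg _) zero_le_one
                refine (norm_sum_le _ _).trans ?_
                calc ∑ j, ‖(-(α j)⁻¹) * Complex.exp (Complex.I * x * y j)‖
                    ≤ ∑ _j : Fin n, M := by
                      refine Finset.sum_le_sum fun j _ => ?_
                      rw [norm_mul, norm_neg, norm_exp_I_mul, mul_one]
                      exact hM j
                  _ = (n:ℝ) * M := by simp [Finset.sum_const, Finset.card_univ, mul_comm]
            _ = (n:ℝ) * M := one_mul _
        refine hB.trans ?_
        rw [← div_eq_mul_inv, le_div_iff₀ h1x, hKdef]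
        nlinarith [abs_nonneg x, mul_le_mul_of_nonneg_left hx hnM, sq_nonneg ((n:ℝ)*M)]
      · rw [if_neg hx, one_mul]
        push_neg at hx
        have hp2 : (n:ℝ) * M + 1 ≤ |x| / 2 := by linarith
        refine (diffbound n y α hα M hM0 hM x hp2).trans ?_
        rw [← div_eq_mul_inv, div_le_div_iff₀ (by linarith) h1x]
        have ht2 : (2:ℝ) ≤ |x| := by linarith
        rw [hKdef]
        nlinarith [mul_le_mul_of_nonneg_right ht2 (sq_nonneg ((n:ℝ)*M)),
          mul_nonneg (mul_nonneg hnM hnM) (abs_nonneg x),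
          mul_nonneg hnM (abs_nonneg x), abs_nonneg x, sq_nonneg ((n:ℝ)*M)]
end
end
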